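/- Let G be an abelian group generated by elements x_1, x_2, x_3, ... subject only to the relations x_2 = 2·x_1, 2·x_{2k+1} = x_{2k+2} + x_{2k} (k ≥ 1), and 2·x_{2k} = x_{2k+1} + x_{2k-1} (k ≥ 1). Then G is an infinite cyclic group generated by x_1; in particular G is torsion-free. -/

import Mathlib

/-- The free abelian group on generators e_1, e_2, ... indexed by positive integers. -/
abbrev F : Type := ℕ+ →₀ ℤ

/-- The generator e_i. -/
noncomputable def e (i : ℕ+) : F := Finsupp.single i 1

/-- The subgroup N generated by e_2 - 2e_1, 2e_{2k+1} - e_{2k+2} - e_{2k} (k ≥ 1),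
and 2e_{2k} - e_{2k+1} - e_{2k-1} (k ≥ 1). -/
noncomputable def N : AddSubgroup F := AddSubgroup.closure
  ({e 2 - 2 • e 1} ∪
   {y | ∃ k : ℕ, ∃ _ : 1 ≤ k,
      y = 2 • e ⟨2 * k + 1, by omega⟩ - e ⟨2 * k + 2, by omega⟩ - e ⟨2 * k, by omega⟩} ∪
   {y | ∃ k : ℕ, ∃ _ : 1 ≤ k,
      y = 2 • e ⟨2 * k, by omega⟩ - e ⟨2 * k + 1, by omega⟩ - e ⟨2 * k - 1, by omega⟩})

lemma pmk_eq {a b : ℕ} {ha : 0 < a} {hb : 0 < b} (h : a = b) :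
    (⟨a, ha⟩ : ℕ+) = ⟨b, hb⟩ := Subtype.ext h

lemma e_eq {a b : ℕ} (ha : 0 < a) (hb : 0 < b) (h : a = b) :
    e ⟨a, ha⟩ = e ⟨b, hb⟩ := by subst h; rfl

/-- The counting homomorphism e_i ↦ i. -/
noncomputable def φ : F →+ ℤ :=
  Finsupp.liftAddHom fun i => AddMonoidHom.mulRight ((i : ℕ) : ℤ)

lemma φ_e (i : ℕ+) : φ (e i) = ((i : ℕ) : ℤ) := by
  simp [φ, e]

@[simp] lemma pnat_mk_coe (n : ℕ) (h : 0 < n) : PNat.val ⟨n, h⟩ = n := rfl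
@[simp] lemma pnat_mk_coe' (n : ℕ) (h : 0 < n) : ((⟨n, h⟩ : ℕ+) : ℕ) = n := rfl

lemma φ_e' (n : ℕ) (h : 0 < n) : φ (e ⟨n, h⟩) = (n : ℤ) := φ_e _

lemma N_le_ker : N ≤ φ.ker := by
  rw [N, AddSubgroup.closure_le]
  rintro x ((rfl | ⟨k, hk, rfl⟩) | ⟨k, hk, rfl⟩) <;>
    simp only [Set.mem_setOf_eq, SetLike.mem_coe, AddMonoidHom.mem_ker, map_sub, map_nsmul,
      φ_e, φ_e', nsmul_eq_mul, pnat_mk_coe, PNat.one_coe, PNat.val_ofNat, Nat.cast_ofNat] <;>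
    push_cast <;> omega

lemma rel_mem (n : ℕ) :
    e ⟨n+3, by omega⟩ - (2:ℤ) • e ⟨n+2, by omega⟩ + e ⟨n+1, by omega⟩ ∈ N := by
  rcases Nat.even_or_odd n with ⟨j, hj⟩ | ⟨j, hj⟩
  · -- n = j + j ; use third family with k = j+1
    have hg : 2 • e ⟨2*(j+1), by omega⟩ - e ⟨2*(j+1)+1, by omega⟩ - e ⟨2*(j+1)-1, by omega⟩ ∈ N := by
      unfold N
      exact AddSubgroup.subset_closure (Or.inr ⟨j+1, by omega, rfl⟩)
    have h1 : e ⟨2*(j+1)+1, by omega⟩ = e ⟨n+3, by omega⟩ := e_eq _ _ (by omega)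
    have h2 : e ⟨2*(j+1), by omega⟩ = e ⟨n+2, by omega⟩ := e_eq _ _ (by omega)
    have h3 : e ⟨2*(j+1)-1, by omega⟩ = e ⟨n+1, by omega⟩ := e_eq _ _ (by omega)
    have := neg_mem hg
    rw [h1, h2, h3] at this
    convert this using 1
    abel
  · -- n = 2j+1 ; use second family with k = j+1
    have hg : 2 • e ⟨2*(j+1)+1, by omega⟩ - e ⟨2*(j+1)+2, by omega⟩ - e ⟨2*(j+1), by omega⟩ ∈ N := by
      unfold N
      exact AddSubgroup.subset_closure (Or.inl (Or.inr ⟨j+1, by omega, rfl⟩))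
    have h1 : e ⟨2*(j+1)+2, by omega⟩ = e ⟨n+3, by omega⟩ := e_eq _ _ (by omega)
    have h2 : e ⟨2*(j+1)+1, by omega⟩ = e ⟨n+2, by omega⟩ := e_eq _ _ (by omega)
    have h3 : e ⟨2*(j+1), by omega⟩ = e ⟨n+1, by omega⟩ := e_eq _ _ (by omega)
    have := neg_mem hg
    rw [h1, h2, h3] at this
    convert this using 1
    abel

lemma e_mem (n : ℕ) : e ⟨n+1, by omega⟩ - ((n:ℤ)+1) • e 1 ∈ N := by
  have key : ∀ m : ℕ, (e ⟨m+1, by omega⟩ - ((m:ℤ)+1) • e 1 ∈ N) ∧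
      (e ⟨m+2, by omega⟩ - ((m:ℤ)+2) • e 1 ∈ N) := by
    intro m
    induction m with
    | zero =>
      constructor
      · have h1 : e ⟨0+1, by omega⟩ = e 1 := e_eq _ _ rfl
        rw [h1]
        have h0 : e 1 - (((0:ℕ):ℤ)+1) • e 1 = 0 := by push_cast; module
        rw [h0]
        exact zero_mem N
      · have hg : e 2 - 2 • e 1 ∈ N := by
          unfold N
          exact AddSubgroup.subset_closure (Or.inl (Or.inl rfl))
        have h2 : e ⟨0+2, by omega⟩ = e 2 := by
          apply e_eq
          rfl
        rw [h2]
        convert hg using 1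
        push_cast; module
    | succ m ih =>
      obtain ⟨hP, hQ⟩ := ih
      refine ⟨hQ, ?_⟩
      have hrel := rel_mem m
      have hcomb := add_mem (add_mem hrel (AddSubgroup.zsmul_mem N hQ 2))
        (neg_mem hP)
      have heq : (e ⟨m+3, by omega⟩ - (2:ℤ) • e ⟨m+2, by omega⟩ + e ⟨m+1, by omega⟩)
          + (2:ℤ) • (e ⟨m+2, by omega⟩ - ((m:ℤ)+2) • e 1)
          + -(e ⟨m+1, by omega⟩ - ((m:ℤ)+1) • e 1)
          = e ⟨m+1+2, by omega⟩ - (((m+1:ℕ):ℤ)+2) • e 1 := by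
        have h1 : e ⟨m+3, by omega⟩ = e ⟨m+1+2, by omega⟩ := e_eq _ _ (by omega)
        rw [h1]
        push_cast
        module
      rw [heq] at hcomb
      exact hcomb
  exact (key n).1

noncomputable def ψ : F ⧸ N →+ ℤ :=
  QuotientAddGroup.lift N φ (fun _ hx => N_le_ker hx)

lemma ψ_mk (f : F) : ψ (QuotientAddGroup.mk f) = φ f := rfl

/-- The abelian group presented by generators x_i (i ≥ 1) and the relations
x_2 = 2x_1, 2x_{2k+1} = x_{2k+2} + x_{2k}, 2x_{2k} = x_{2k+1} + x_{2k-1} (k ≥ 1) is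
infinite cyclic generated by x_1; in particular it is torsion-free. -/
theorem stmt18 :
    AddSubgroup.closure {(QuotientAddGroup.mk (e 1) : F ⧸ N)} = ⊤ ∧
    Nonempty ((F ⧸ N) ≃+ ℤ) ∧
    ∀ (g : F ⧸ N) (z : ℤ), z ≠ 0 → z • g = 0 → g = 0 := by
  set x1 : F ⧸ N := QuotientAddGroup.mk (e 1) with hx1
  -- every e_i maps into the cyclic subgroup generated by x1
  have hmk_e : ∀ i : ℕ+, (QuotientAddGroup.mk (e i) : F ⧸ N) = ((i:ℕ):ℤ) • x1 := by
    intro i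
    obtain ⟨m, hm⟩ : ∃ m : ℕ, (i:ℕ) = m + 1 := ⟨(i:ℕ) - 1, by have := i.pos; omega⟩
    have h2 : e ⟨m+1, by omega⟩ = e i := by
      have : (⟨m+1, by omega⟩ : ℕ+) = i := Subtype.ext hm.symm
      rw [this]
    have h1 := e_mem m
    rw [h2] at h1
    have : (QuotientAddGroup.mk (e i) : F ⧸ N) = QuotientAddGroup.mk (((m:ℤ)+1) • e 1) := by
      rw [QuotientAddGroup.eq_iff_sub_mem]
      exact h1
    rw [this, hm]
    push_cast
    rfl
  have hgen : AddSubgroup.closure {x1} = ⊤ := by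
    rw [eq_top_iff]
    rintro g -
    induction g using QuotientAddGroup.induction_on with
    | H f =>
      induction f using Finsupp.induction_linear with
      | zero => simpa using zero_mem _
      | add f g hf hg =>
        have : (QuotientAddGroup.mk (f + g) : F ⧸ N)
            = QuotientAddGroup.mk f + QuotientAddGroup.mk g := rfl
        rw [this]; exact add_mem hf hg
      | single i b =>
        have hb : Finsupp.single i b = b • e i := by
          simp [e, Finsupp.smul_single]
        have : (QuotientAddGroup.mk (Finsupp.single i b) : F ⧸ N)
            = b • QuotientAddGroup.mk (e i) := by
          rw [hb]
          exact (map_zsmul (QuotientAddGroup.mk' N) b (e i))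
        rw [this, hmk_e i]
        exact AddSubgroup.zsmul_mem _ (AddSubgroup.zsmul_mem _
          (AddSubgroup.subset_closure (Set.mem_singleton _)) _) _
  have hψ1 : ψ x1 = 1 := by
    rw [hx1, ψ_mk, φ_e]
    rfl
  have hinj : Function.Injective ψ := by
    rw [injective_iff_map_eq_zero]
    intro g hg
    have hgmem : g ∈ AddSubgroup.closure {x1} := by rw [hgen]; trivial
    obtain ⟨z, hz⟩ := AddSubgroup.mem_closure_singleton.mp hgmem
    have : ψ (z • x1) = z := by rw [map_zsmul, hψ1, smul_eq_mul, mul_one]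
    rw [hz] at this
    rw [hg] at this
    rw [← hz, ← this]
    simp
  have hsurj : Function.Surjective ψ := by
    intro z
    refine ⟨z • x1, ?_⟩
    rw [map_zsmul, hψ1, smul_eq_mul, mul_one]
  refine ⟨hgen, ⟨AddEquiv.ofBijective ψ ⟨hinj, hsurj⟩⟩, ?_⟩
  intro g z hz h0
  apply hinj
  have : ψ (z • g) = z * ψ g := by rw [map_zsmul, smul_eq_mul]
  rw [h0, map_zero] at this
  have hψg : ψ g = 0 := by
    rcases mul_eq_zero.mp this.symm with h | h
    · exact absurd h hz
    · exact h
  rw [hψg, map_zero]
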